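/- For the transitive tournament T_h on vertices {1,...,h} with edges (i,j) for i < j: if h is even then s(T_h) ≤ h²/4, and if h is odd then s(T_h) ≤ (h²−1)/4. -/

import Mathlib

open scoped Classical

/-- A permutation `π` of the vertices respects a coloring `C` if each color
class is consecutive in the order induced by `π`. -/
def Respects {h : ℕ} (C : Fin h → ℕ) (π : Equiv.Perm (Fin h)) : Prop :=
  ∀ u v w : Fin h, C u = C w → π u ≤ π v → π v ≤ π w → C v = C u

/-- `sC E C` is the maximum, over permutations `π` respecting `C`, of the number
of edges `(u,v)` of the digraph with edge set `E` having `π u < π v`. -/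
noncomputable def sC {h : ℕ} (E : Finset (Fin h × Fin h)) (C : Fin h → ℕ) : ℕ :=
  (Finset.univ.filter fun π : Equiv.Perm (Fin h) => Respects C π).sup
    (fun π => (E.filter fun e => π e.1 < π e.2).card)

/-- The skewness `s(H)`: minimum over all vertex colorings `C` of `sC E C`. -/
noncomputable def skew {h : ℕ} (E : Finset (Fin h × Fin h)) : ℕ :=
  sInf (Set.range (sC E))

/-- The edge set of the transitive tournament on `Fin h`. -/
def THedges (h : ℕ) : Finset (Fin h × Fin h) :=
  Finset.univ.filter (fun e : Fin h × Fin h => e.1 < e.2)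

namespace Stmt7Aux

def mir {h : ℕ} (u : Fin h) : Fin h := ⟨h - 1 - u.val, by have := u.isLt; omega⟩

def mm {h : ℕ} (e : Fin h × Fin h) : Fin h × Fin h := (mir e.2, mir e.1)

lemma mir_mir {h : ℕ} (u : Fin h) : mir (mir u) = u := by
  have := u.isLt
  apply Fin.ext
  simp [mir]
  omega

lemma mm_mm {h : ℕ} (e : Fin h × Fin h) : mm (mm e) = e := by
  cases e; simp [mm, mir_mir]

lemma mm_inj {h : ℕ} : Function.Injective (mm (h := h)) := fun a b hab => by
  rw [← mm_mm a, hab, mm_mm]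

def CC (h : ℕ) : Fin h → ℕ := fun i => min i.val (h - 1 - i.val)

lemma mem_TH {h : ℕ} {e : Fin h × Fin h} : e ∈ THedges h ↔ e.1 < e.2 := by
  simp [THedges]

lemma mm_mem {h : ℕ} {e : Fin h × Fin h} (he : e ∈ THedges h) : mm e ∈ THedges h := by
  rw [mem_TH] at *
  have h1 := e.1.isLt; have h2 := e.2.isLt
  simp only [mm, mir, Fin.lt_def] at *
  omega

lemma key {h : ℕ} {π : Equiv.Perm (Fin h)} (hπ : Respects (CC h) π)
    {e : Fin h × Fin h} (he : e.1 < e.2)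
    (hf : π e.1 < π e.2) (hg : π (mm e).1 < π (mm e).2) : mm e = e := by
  obtain ⟨u, v⟩ := e
  simp only [mm] at hg ⊢
  simp only [] at he hf
  by_contra hne
  have hvne : mir u ≠ v := by
    intro hh
    apply hne
    subst hh
    rw [mir_mir]
  have hu := u.isLt; have hv := v.isLt
  have huv : u.val < v.val := he
  have hvneval : (h : ℕ) - 1 - u.val ≠ v.val := fun hh => hvne (Fin.ext hh)
  have hCu : CC h u = CC h (mir u) := by
    simp only [CC, mir]
    omega
  have hCv : CC h v = CC h (mir v) := by
    simp only [CC, mir]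
    omega
  have hCvu : CC h v ≠ CC h u := by
    simp only [CC]
    omega
  have n1 : ¬(π u ≤ π v ∧ π v ≤ π (mir u)) :=
    fun ⟨p, q⟩ => hCvu (hπ u v (mir u) hCu p q)
  have n2 : ¬(π (mir u) ≤ π v ∧ π v ≤ π u) :=
    fun ⟨p, q⟩ => hCvu ((hπ (mir u) v u hCu.symm p q).trans hCu.symm)
  have n3 : ¬(π u ≤ π (mir v) ∧ π (mir v) ≤ π (mir u)) :=
    fun ⟨p, q⟩ => hCvu (hCv.trans (hπ u (mir v) (mir u) hCu p q))
  have n4 : ¬(π (mir u) ≤ π (mir v) ∧ π (mir v) ≤ π u) :=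
    fun ⟨p, q⟩ => hCvu (hCv.trans ((hπ (mir u) (mir v) u hCu.symm p q).trans hCu.symm))
  have n5 : ¬(π v ≤ π u ∧ π u ≤ π (mir v)) :=
    fun ⟨p, q⟩ => hCvu (hπ v u (mir v) hCv p q).symm
  have n6 : ¬(π (mir v) ≤ π u ∧ π u ≤ π v) :=
    fun ⟨p, q⟩ => hCvu ((hπ (mir v) u v hCv.symm p q).trans hCv.symm).symm
  have n7 : ¬(π v ≤ π (mir u) ∧ π (mir u) ≤ π (mir v)) :=
    fun ⟨p, q⟩ => hCvu (hCu.trans (hπ v (mir u) (mir v) hCv p q)).symm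
  have n8 : ¬(π (mir v) ≤ π (mir u) ∧ π (mir u) ≤ π v) :=
    fun ⟨p, q⟩ => hCvu (hCu.trans ((hπ (mir v) (mir u) v hCv.symm p q).trans hCv.symm)).symm
  simp only [Fin.lt_def] at hf hg
  simp only [Fin.le_def, not_and, not_le] at n1 n2 n3 n4 n5 n6 n7 n8
  omega

lemma card_bound {h : ℕ} (π : Equiv.Perm (Fin h)) (hπ : Respects (CC h) π) :
    4 * ((THedges h).filter fun e => π e.1 < π e.2).card ≤ h * h := by
  classical
  set E := THedges h with hE
  set F := E.filter (fun e => π e.1 < π e.2) with hF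
  set G := F.filter (fun e => ¬ mm e = e) with hG
  set X := F.filter (fun e => mm e = e) with hX
  have hsplit : X.card + G.card = F.card :=
    Finset.card_filter_add_card_filter_not (p := fun e => mm e = e)
  have hGF : G ⊆ F := Finset.filter_subset _ _
  have hXF : X ⊆ F := Finset.filter_subset _ _
  have hFE : F ⊆ E := Finset.filter_subset _ _
  have hmmG : ∀ e ∈ G, mm e ∈ E ∧ mm e ∉ F := by
    intro e heG
    have h1 := Finset.mem_filter.mp heG
    have h2 := Finset.mem_filter.mp h1.1
    have heE : e ∈ E := h2.1
    have hfwd : π e.1 < π e.2 := h2.2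
    have hlt : e.1 < e.2 := mem_TH.mp heE
    refine ⟨mm_mem heE, fun hmemF => ?_⟩
    have h3 := Finset.mem_filter.mp hmemF
    exact h1.2 (key hπ hlt hfwd h3.2)
  have hd1 : Disjoint X G := Finset.disjoint_filter_filter_not F F _
  have hd2 : Disjoint X (G.image mm) := by
    rw [Finset.disjoint_left]
    intro a haX haI
    obtain ⟨e, heG, hme⟩ := Finset.mem_image.mp haI
    exact (hmmG e heG).2 (hme ▸ hXF haX)
  have hd3 : Disjoint G (G.image mm) := by
    rw [Finset.disjoint_left]
    intro a haG haI
    obtain ⟨e, heG, hme⟩ := Finset.mem_image.mp haI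
    exact (hmmG e heG).2 (hme ▸ hGF haG)
  have himgcard : (G.image mm).card = G.card := Finset.card_image_of_injective _ mm_inj
  have hsub : X ∪ G ∪ G.image mm ⊆ E := by
    intro a ha
    rcases Finset.mem_union.mp ha with ha' | ha'
    · rcases Finset.mem_union.mp ha' with ha'' | ha''
      · exact hFE (hXF ha'')
      · exact hFE (hGF ha'')
    · obtain ⟨e, heG, hme⟩ := Finset.mem_image.mp ha'
      exact hme ▸ (hmmG e heG).1
  have hucard : (X ∪ G ∪ G.image mm).card = X.card + G.card + G.card := by
    rw [Finset.card_union_of_disjoint, Finset.card_union_of_disjoint hd1, himgcard]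
    · exact Finset.disjoint_union_left.mpr ⟨hd2, hd3⟩
  have hbig : X.card + G.card + G.card ≤ E.card := by
    rw [← hucard]; exact Finset.card_le_card hsub
  have hXbound : X.card ≤ h / 2 := by
    have := Finset.card_le_card_of_injOn (f := fun e : Fin h × Fin h => e.1.val)
      (s := X) (t := Finset.range (h / 2)) ?_ ?_
    · simpa using this
    · intro e heX
      have h1 := Finset.mem_filter.mp heX
      have h2 := Finset.mem_filter.mp h1.1
      have hlt : e.1 < e.2 := mem_TH.mp h2.1
      have hfix := h1.2
      have hfix2 : (mir e.1 : Fin h) = e.2 := by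
        have := congrArg Prod.snd hfix
        simpa [mm] using this
      have hval : e.2.val = h - 1 - e.1.val := by
        rw [← hfix2]; rfl
      have h3 := e.2.isLt
      have h4 : e.1.val < e.2.val := hlt
      simp only [Finset.mem_coe, Finset.mem_range]
      omega
    · intro a haX b hbX hab
      have ha1 := Finset.mem_filter.mp haX
      have hb1 := Finset.mem_filter.mp hbX
      have ha2 : (mir a.1 : Fin h) = a.2 := by
        have := congrArg Prod.snd ha1.2; simpa [mm] using this
      have hb2 : (mir b.1 : Fin h) = b.2 := by
        have := congrArg Prod.snd hb1.2; simpa [mm] using this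
      have h1 : a.1 = b.1 := Fin.ext hab
      have h2 : a.2 = b.2 := by rw [← ha2, ← hb2, h1]
      exact Prod.ext h1 h2
  have hEbound : E.card + E.card ≤ h * h - h := by
    have hd : Disjoint E (E.image Prod.swap) := by
      rw [Finset.disjoint_left]
      intro a haE haI
      obtain ⟨f, hfE, hfs⟩ := Finset.mem_image.mp haI
      have h1 : a.1 < a.2 := mem_TH.mp haE
      have h2 : f.1 < f.2 := mem_TH.mp hfE
      have : a.1 = f.2 ∧ a.2 = f.1 := by
        constructor <;> rw [← hfs] <;> rfl
      exact absurd (this.1 ▸ this.2 ▸ h1) (lt_asymm h2)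
    have hic : (E.image Prod.swap).card = E.card :=
      Finset.card_image_of_injective _ Prod.swap_injective
    have hsub2 : E ∪ E.image Prod.swap ⊆ (Finset.univ : Finset (Fin h)).offDiag := by
      intro a ha
      rcases Finset.mem_union.mp ha with ha' | ha'
      · exact Finset.mem_offDiag.mpr ⟨Finset.mem_univ _, Finset.mem_univ _,
          ne_of_lt (mem_TH.mp ha')⟩
      · obtain ⟨f, hfE, hfs⟩ := Finset.mem_image.mp ha'
        have h2 : f.1 < f.2 := mem_TH.mp hfE
        refine Finset.mem_offDiag.mpr ⟨Finset.mem_univ _, Finset.mem_univ _, ?_⟩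
        rw [← hfs]
        exact ne_of_gt h2
    have hoff : ((Finset.univ : Finset (Fin h)).offDiag).card = h * h - h := by
      rw [Finset.offDiag_card]
      simp
    calc E.card + E.card = (E ∪ E.image Prod.swap).card := by
          rw [Finset.card_union_of_disjoint hd, hic]
      _ ≤ _ := Finset.card_le_card hsub2
      _ = h * h - h := hoff
  generalize hM : h * h = M at hEbound ⊢
  omega

end Stmt7Aux

theorem stmt7 (h : ℕ) :
    (Even h → skew (THedges h) ≤ h ^ 2 / 4) ∧
    (Odd h → skew (THedges h) ≤ (h ^ 2 - 1) / 4) := by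
  have main : skew (THedges h) ≤ h * h / 4 := by
    have h1 : skew (THedges h) ≤ sC (THedges h) (Stmt7Aux.CC h) :=
      Nat.sInf_le (Set.mem_range_self _)
    refine h1.trans ?_
    apply Finset.sup_le
    intro π hπ
    have hr : Respects (Stmt7Aux.CC h) π := (Finset.mem_filter.mp hπ).2
    have hb := Stmt7Aux.card_bound π hr
    generalize hM : h * h = M at hb ⊢
    omega
  constructor
  · intro _
    rw [pow_two]
    exact main
  · intro ho
    obtain ⟨t, ht⟩ := ho.mul ho
    rw [pow_two, ht]
    have h2 : skew (THedges h) ≤ (2 * t + 1) / 4 := ht ▸ main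
    exact h2.trans (by omega)
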